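/- Let x ∈ E^N have pairwise distinct entries, and let Q = Σ_{p=0}^{q} u_p Σ_{a∈[N]^[q]_p} δ_{x^a} be a signed measure on E^q, where [N]^[q]_p is the set of maps [q]→[N] with image of cardinality p and u_p ∈ ℝ. Then ‖Q‖_tv = Σ_{p=0}^{q} |u_p| · (N)_p · S(q,p), where S(q,p) is the Stirling number of the second kind. -/

import Mathlib

open MeasureTheory
open scoped ENNReal NNReal

/-- Stirling numbers of the second kind. -/
def stirlingSnd : ℕ → ℕ → ℕ
  | 0, 0 => 1
  | 0, _ + 1 => 0
  | _ + 1, 0 => 0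
  | n + 1, k + 1 => (k + 1) * stirlingSnd n (k + 1) + stirlingSnd n k

open Finset in
private lemma inner_count {N : ℕ} (S : Finset (Fin N)) (p : ℕ) :
    (univ.filter fun y => (insert y S).card = p).card
      = (if S.card = p then S.card else 0)
        + (if S.card + 1 = p then N - S.card else 0) := by
  classical
  have hsplit : (univ.filter fun y => (insert y S).card = p)
      = (S.filter fun y => (insert y S).card = p)
        ∪ (Sᶜ.filter fun y => (insert y S).card = p) := by
    rw [← Finset.filter_union, Finset.union_compl]
  rw [hsplit, Finset.card_union_of_disjoint
    (Finset.disjoint_filter_filter disjoint_compl_right)]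
  congr 1
  · have h1 : (S.filter fun y => (insert y S).card = p)
        = if S.card = p then S else ∅ := by
      split_ifs with h
      · apply Finset.filter_true_of_mem
        intro y hy; rw [Finset.insert_eq_self.2 hy]; exact h
      · apply Finset.filter_false_of_mem
        intro y hy; rw [Finset.insert_eq_self.2 hy]; exact h
    rw [h1]; split_ifs <;> simp
  · have h2 : (Sᶜ.filter fun y => (insert y S).card = p)
        = if S.card + 1 = p then Sᶜ else ∅ := by
      split_ifs with h
      · apply Finset.filter_true_of_mem
        intro y hy
        rw [Finset.card_insert_of_notMem (Finset.mem_compl.1 hy)]; exact h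
      · apply Finset.filter_false_of_mem
        intro y hy
        rw [Finset.card_insert_of_notMem (Finset.mem_compl.1 hy)]; exact h
    rw [h2]; split_ifs <;> simp [Finset.card_compl]

private lemma image_cons {N q : ℕ} (y : Fin N) (b : Fin q → Fin N) :
    Finset.univ.image (Fin.cons y b : Fin (q+1) → Fin N)
      = insert y (Finset.univ.image b) := by
  ext z
  simp only [Finset.mem_image, Finset.mem_insert, Finset.mem_univ, true_and]
  constructor
  · rintro ⟨i, rfl⟩
    refine Fin.cases ?_ ?_ i
    · left; rw [Fin.cons_zero]
    · intro j; right; exact ⟨j, by simp⟩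
  · rintro (rfl | ⟨j, rfl⟩)
    · exact ⟨0, Fin.cons_zero _ _⟩
    · exact ⟨j.succ, by simp⟩

private lemma count_image_card (q N p : ℕ) :
    (Finset.univ.filter fun a : Fin q → Fin N =>
        (Finset.univ.image a).card = p).card
      = stirlingSnd q p * N.descFactorial p := by
  classical
  induction q generalizing p with
  | zero =>
      have himg : ∀ a : Fin 0 → Fin N, Finset.univ.image a = ∅ := fun a => by simp
      cases p with
      | zero =>
          rw [Finset.filter_true_of_mem (fun a _ => by rw [himg a]; rfl)]
          simp [stirlingSnd]
      | succ p =>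
          rw [Finset.filter_false_of_mem (fun a _ => by rw [himg a]; simp)]
          simp [stirlingSnd]
  | succ q ih =>
      cases p with
      | zero =>
          rw [Finset.filter_false_of_mem (fun a _ => ?_)]
          · simp [stirlingSnd]
          · simp only [Finset.card_eq_zero, Finset.image_eq_empty]
            exact fun h => absurd h (Finset.univ_nonempty).ne_empty
      | succ p =>
          have key : (Finset.univ.filter fun a : Fin (q+1) → Fin N =>
              (Finset.univ.image a).card = p + 1).card
              = ∑ b : Fin q → Fin N,
                  (Finset.univ.filter fun y : Fin N =>
                    (insert y (Finset.univ.image b)).card = p + 1).card := by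
            rw [Finset.card_eq_sum_ones, Finset.sum_filter,
              ← Equiv.sum_comp (Fin.consEquiv (fun _ : Fin (q+1) => Fin N))
                (fun a => if (Finset.univ.image a).card = p + 1 then 1 else 0),
              Fintype.sum_prod_type, Finset.sum_comm]
            refine Finset.sum_congr rfl fun b _ => ?_
            rw [Finset.card_eq_sum_ones, Finset.sum_filter]
            refine Finset.sum_congr rfl fun y0 _ => ?_
            have : (Fin.consEquiv (fun _ : Fin (q+1) => Fin N)) (y0, b)
                = Fin.cons y0 b := rfl
            rw [this, image_cons]
          rw [key]
          simp_rw [inner_count]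
          rw [Finset.sum_add_distrib]
          have e1 : (∑ b : Fin q → Fin N,
              if (Finset.univ.image b).card = p + 1
                then (Finset.univ.image b).card else 0)
              = (p + 1) * (stirlingSnd q (p+1) * N.descFactorial (p+1)) := by
            rw [← Finset.sum_filter, ← ih (p+1)]
            rw [Finset.sum_congr rfl (fun b hb => (Finset.mem_filter.1 hb).2),
              Finset.sum_const, smul_eq_mul, mul_comm]
          have e2 : (∑ b : Fin q → Fin N,
              if (Finset.univ.image b).card + 1 = p + 1
                then N - (Finset.univ.image b).card else 0)
              = (stirlingSnd q p * N.descFactorial p) * (N - p) := by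
            have hiff : ∀ b : Fin q → Fin N,
                ((Finset.univ.image b).card + 1 = p + 1)
                  = ((Finset.univ.image b).card = p) := by
              intro b; simp
            simp_rw [hiff]
            rw [← Finset.sum_filter, ← ih p]
            rw [Finset.sum_congr rfl
              (fun b hb => by rw [(Finset.mem_filter.1 hb).2]),
              Finset.sum_const, smul_eq_mul, mul_comm]
          rw [e1, e2, Nat.descFactorial_succ]
          show _ = ((p + 1) * stirlingSnd q (p + 1) + stirlingSnd q p)
            * ((N - p) * N.descFactorial p)
          ring

private lemma signed_sum_apply {α ι : Type*} [MeasurableSpace α] (s : Finset ι)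
    (v : ι → SignedMeasure α) (k : Set α) :
    (∑ i ∈ s, v i) k = ∑ i ∈ s, v i k := by
  classical
  induction s using Finset.induction_on with
  | empty => simp
  | insert _ _ hi ih =>
      rw [Finset.sum_insert hi, Finset.sum_insert hi,
        VectorMeasure.add_apply, ih]

private lemma ofReal_add_ofReal_neg (r : ℝ) :
    ENNReal.ofReal r + ENNReal.ofReal (-r) = ENNReal.ofReal |r| := by
  rcases le_total 0 r with h | h
  · rw [ENNReal.ofReal_eq_zero.2 (neg_nonpos.2 h), add_zero, abs_of_nonneg h]
  · rw [ENNReal.ofReal_eq_zero.2 h, zero_add, abs_of_nonpos h]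

/-- For `x ∈ E^N` with pairwise distinct entries, the signed measure
`Q = Σ_{p=0}^{q} u_p Σ_{a ∈ [N]^[q]_p} δ_{x^a}` on `E^q` has total variation norm
`Σ_{p=0}^{q} |u_p| · (N)_p · S(q,p)`. -/
theorem stmt_10 {E : Type*} [MeasurableSpace E] [MeasurableSingletonClass E]
    (N q : ℕ) (hq : 1 ≤ q) (hqN : q ≤ N) (x : Fin N → E) (hx : Function.Injective x)
    (u : ℕ → ℝ) :
    (∑ p ∈ Finset.range (q + 1),
        u p •
          ∑ a ∈ Finset.univ.filter
              (fun a : Fin q → Fin N => (Finset.univ.image a).card = p),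
            (Measure.dirac (fun i => x (a i))).toSignedMeasure).totalVariation Set.univ =
      ENNReal.ofReal
        (∑ p ∈ Finset.range (q + 1),
          |u p| * (N.descFactorial p : ℝ) * (stirlingSnd q p : ℝ)) := by
  classical
  set y : (Fin q → Fin N) → (Fin q → E) := fun a i => x (a i) with hy
  have hyinj : Function.Injective y := fun a b hab =>
    funext fun i => hx (congrFun hab i)
  set c : (Fin q → Fin N) → ℝ := fun a => u ((Finset.univ.image a).card) with hc
  have hPmem : ∀ a : Fin q → Fin N,
      (Finset.univ.image a).card ∈ Finset.range (q + 1) := by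
    intro a
    rw [Finset.mem_range, Nat.lt_succ_iff]
    calc (Finset.univ.image a).card ≤ (Finset.univ : Finset (Fin q)).card :=
          Finset.card_image_le
      _ = q := by simp
  -- rewrite Q as a single sum
  have hQ : (∑ p ∈ Finset.range (q + 1),
        u p •
          ∑ a ∈ Finset.univ.filter
              (fun a : Fin q → Fin N => (Finset.univ.image a).card = p),
            (Measure.dirac (fun i => x (a i))).toSignedMeasure)
      = ∑ a : Fin q → Fin N, c a • (Measure.dirac (y a)).toSignedMeasure := by
    rw [← Finset.sum_fiberwise_of_maps_to (fun a _ => hPmem a)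
      (fun a => c a • (Measure.dirac (y a)).toSignedMeasure)]
    refine Finset.sum_congr rfl fun p hp => ?_
    rw [Finset.smul_sum]
    refine Finset.sum_congr rfl fun a ha => ?_
    have hpa := (Finset.mem_filter.1 ha).2
    rw [hc]
    simp only [hpa]; rfl
  -- the positive and negative parts
  set μ : Measure (Fin q → E) :=
    ∑ a : Fin q → Fin N, ENNReal.ofReal (c a) • Measure.dirac (y a) with hμ
  set ν : Measure (Fin q → E) :=
    ∑ a : Fin q → Fin N, ENNReal.ofReal (-c a) • Measure.dirac (y a) with hν
  haveI hμfin : IsFiniteMeasure μ := by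
    constructor
    rw [hμ, Measure.finset_sum_apply]
    refine ENNReal.sum_lt_top.2 fun a _ => ?_
    simp [ENNReal.ofReal_lt_top]
  haveI hνfin : IsFiniteMeasure ν := by
    constructor
    rw [hν, Measure.finset_sum_apply]
    refine ENNReal.sum_lt_top.2 fun a _ => ?_
    simp [ENNReal.ofReal_lt_top]
  set A : Set (Fin q → E) :=
    ↑((Finset.univ.filter fun a : Fin q → Fin N => c a < 0).image y) with hA
  have measA : MeasurableSet A := (Finset.finite_toSet _).measurableSet
  have hmemA : ∀ a : Fin q → Fin N, y a ∈ A ↔ c a < 0 := by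
    intro a
    constructor
    · intro h
      rw [hA] at h
      simp only [Finset.coe_image, Set.mem_image, Finset.mem_coe,
        Finset.mem_filter, Finset.mem_univ, true_and] at h
      obtain ⟨b, hb, hba⟩ := h
      rwa [← hyinj hba]
    · intro h
      rw [hA]
      simp only [Finset.coe_image, Set.mem_image, Finset.mem_coe,
        Finset.mem_filter, Finset.mem_univ, true_and]
      exact ⟨a, h, rfl⟩
  have hμA : μ A = 0 := by
    rw [hμ, Measure.finset_sum_apply]
    refine Finset.sum_eq_zero fun a _ => ?_
    by_cases h : c a < 0
    · rw [Measure.smul_apply, smul_eq_mul,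
        ENNReal.ofReal_eq_zero.2 h.le, zero_mul]
    · rw [Measure.smul_apply, smul_eq_mul, Measure.dirac_apply' _ measA,
        Set.indicator_of_notMem (fun hmem => h ((hmemA a).1 hmem)), mul_zero]
  have hνAc : ν Aᶜ = 0 := by
    rw [hν, Measure.finset_sum_apply]
    refine Finset.sum_eq_zero fun a _ => ?_
    by_cases h : c a < 0
    · rw [Measure.smul_apply, smul_eq_mul, Measure.dirac_apply' _ measA.compl,
        Set.indicator_of_notMem (Set.notMem_compl_iff.2 ((hmemA a).2 h)), mul_zero]
    · rw [Measure.smul_apply, smul_eq_mul,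
        ENNReal.ofReal_eq_zero.2 (neg_nonpos.2 (not_lt.1 h)), zero_mul]
  have hsing : μ ⟂ₘ ν := ⟨A, measA, hμA, hνAc⟩
  set j : JordanDecomposition (Fin q → E) := ⟨μ, ν, hsing⟩ with hj
  -- Q equals the signed measure of the Jordan decomposition
  have hQj : (∑ a : Fin q → Fin N, c a • (Measure.dirac (y a)).toSignedMeasure)
      = j.toSignedMeasure := by
    ext k hk
    rw [signed_sum_apply]
    show _ = (μ.toSignedMeasure - ν.toSignedMeasure) k
    rw [Measure.toSignedMeasure_sub_apply hk, hμ, hν, measureReal_def, measureReal_def,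
      Measure.finset_sum_apply, Measure.finset_sum_apply,
      ENNReal.toReal_sum (fun a _ => by
        simp only [Measure.smul_apply, smul_eq_mul]
        exact (ENNReal.mul_lt_top ENNReal.ofReal_lt_top
          (measure_lt_top _ _)).ne),
      ENNReal.toReal_sum (fun a _ => by
        simp only [Measure.smul_apply, smul_eq_mul]
        exact (ENNReal.mul_lt_top ENNReal.ofReal_lt_top
          (measure_lt_top _ _)).ne),
      ← Finset.sum_sub_distrib]
    refine Finset.sum_congr rfl fun a _ => ?_
    rw [VectorMeasure.smul_apply, Measure.toSignedMeasure_apply_measurable hk]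
    simp only [Measure.smul_apply, smul_eq_mul, ENNReal.toReal_mul, measureReal_def,
      ENNReal.toReal_ofReal']
    rw [← sub_mul, max_zero_sub_max_neg_zero_eq_self]
  rw [hQ, hQj]
  have hjd : j.toSignedMeasure.toJordanDecomposition = j :=
    JordanDecomposition.toJordanDecomposition_toSignedMeasure j
  rw [SignedMeasure.totalVariation, hjd]
  show (μ + ν) Set.univ = _
  rw [Measure.add_apply, hμ, hν, Measure.finset_sum_apply, Measure.finset_sum_apply,
    ← Finset.sum_add_distrib]
  have hterm : ∀ a : Fin q → Fin N,
      (ENNReal.ofReal (c a) • Measure.dirac (y a)) Set.univ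
        + (ENNReal.ofReal (-c a) • Measure.dirac (y a)) Set.univ
      = ENNReal.ofReal |c a| := by
    intro a
    rw [Measure.smul_apply, Measure.smul_apply, smul_eq_mul, smul_eq_mul,
      measure_univ, mul_one, mul_one, ofReal_add_ofReal_neg]
  rw [Finset.sum_congr rfl (fun a _ => hterm a),
    ← ENNReal.ofReal_sum_of_nonneg (fun a _ => abs_nonneg _)]
  congr 1
  rw [← Finset.sum_fiberwise_of_maps_to (fun a _ => hPmem a) (fun a => |c a|)]
  refine Finset.sum_congr rfl fun p hp => ?_
  have hstep : ∀ a ∈ Finset.univ.filter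
      (fun a : Fin q → Fin N => (Finset.univ.image a).card = p),
      |c a| = |u p| := by
    intro a ha
    have h2 := (Finset.mem_filter.1 ha).2
    simp only [hc, h2]
  rw [Finset.sum_congr rfl hstep, Finset.sum_const, count_image_card q N p,
    nsmul_eq_mul]
  push_cast
  ring
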